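/- The number of triples (A, B, C) of odd-cardinality subsets of [n] with |Δ(A,B,C)| = 1 equals n · 4^{n−1}, where Δ(A,B,C) = (A∖(B∪C)) ∪ (B∖(A∪C)) ∪ (C∖(A∪B)) ∪ (A∩B∩C). -/
import Mathlib

open Finset

/-- `Δ(X,Y,Z) = (X∖(Y∪Z)) ∪ (Y∖(X∪Z)) ∪ (Z∖(X∪Y)) ∪ (X∩Y∩Z)`. -/
def tripleDelta {n : ℕ} (X Y Z : Finset (Fin n)) : Finset (Fin n) :=
  (X \ (Y ∪ Z)) ∪ (Y \ (X ∪ Z)) ∪ (Z \ (X ∪ Y)) ∪ (X ∩ Y ∩ Z)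

lemma tripleDelta_eq {n : ℕ} (X Y Z : Finset (Fin n)) :
    tripleDelta X Y Z = symmDiff (symmDiff X Y) Z := by
  ext a
  simp only [tripleDelta, mem_union, mem_sdiff, mem_inter, Finset.mem_symmDiff]
  tauto

lemma card_symmDiff_key {α : Type*} [DecidableEq α] (s t : Finset α) :
    (symmDiff s t).card + 2 * (s ∩ t).card = s.card + t.card := by
  have h1 := Finset.card_union_add_card_inter s t
  have h2 : (symmDiff s t).card + (s ∩ t).card = (s ∪ t).card := by
    rw [← Finset.card_union_of_disjoint]
    · congr 1
      ext a; simp [Finset.mem_symmDiff]; tauto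
    · rw [Finset.disjoint_left]
      intro a ha
      simp only [Finset.mem_symmDiff] at ha
      simp only [mem_inter]
      tauto
  omega

lemma odd_symmDiff {α : Type*} [DecidableEq α] (s t : Finset α) :
    (symmDiff s t).card % 2 = (s.card + t.card) % 2 := by
  have := card_symmDiff_key s t
  omega

lemma card_odd_subsets (n : ℕ) (hn : 1 ≤ n) :
    ((Finset.univ : Finset (Finset (Fin n))).filter fun s => Odd s.card).card
      = 2 ^ (n - 1) := by
  classical
  set O := (Finset.univ : Finset (Finset (Fin n))).filter fun s => Odd s.card with hO
  set E := (Finset.univ : Finset (Finset (Fin n))).filter fun s => ¬ Odd s.card with hE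
  have z : Fin n := ⟨0, hn⟩
  have hcard : O.card = E.card := by
    apply Finset.card_bij' (fun s _ => symmDiff s {z}) (fun s _ => symmDiff s {z})
    · intro s _; exact symmDiff_symmDiff_cancel_right {z} s
    · intro s _; exact symmDiff_symmDiff_cancel_right {z} s
    · intro s hs
      simp only [hO, hE, mem_filter, mem_univ, true_and] at hs ⊢
      rw [Nat.odd_iff] at hs ⊢
      have := odd_symmDiff s {z}
      simp at this
      omega
    · intro s hs
      simp only [hO, hE, mem_filter, mem_univ, true_and] at hs ⊢
      rw [Nat.odd_iff] at hs ⊢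
      have := odd_symmDiff s {z}
      simp at this
      omega
  have hsum : O.card + E.card = 2 ^ n := by
    rw [hO, hE, Finset.card_filter_add_card_filter_not]
    simp [Finset.card_univ]
  have : 2 ^ n = 2 * 2 ^ (n - 1) := by
    rw [← pow_succ']
    congr 1
    omega
  omega

lemma card_singletons (n : ℕ) :
    ((Finset.univ : Finset (Finset (Fin n))).filter fun s => s.card = 1).card = n := by
  classical
  have h : ((Finset.univ : Finset (Finset (Fin n))).filter fun s => s.card = 1).card
      = (Finset.univ : Finset (Fin n)).card := by
    apply Finset.card_bij' (fun s hs => s.min' (by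
        simp only [mem_filter] at hs; rw [← Finset.card_pos]; omega)) (fun a _ => {a})
    · intro s hs
      simp only [mem_filter, mem_univ, true_and] at hs
      obtain ⟨a, rfl⟩ := Finset.card_eq_one.mp hs
      simp
    · intro a _
      simp
    · intros; simp
    · intro a _; simp [mem_filter]
  rw [h]; simp

theorem stmt12 (n : ℕ) (hn : 1 ≤ n) :
    (Finset.univ.filter fun t : Finset (Fin n) × Finset (Fin n) × Finset (Fin n) =>
        Odd t.1.card ∧ Odd t.2.1.card ∧ Odd t.2.2.card ∧
          (tripleDelta t.1 t.2.1 t.2.2).card = 1).card = n * 4 ^ (n - 1) := by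
  classical
  have key : (Finset.univ.filter fun t : Finset (Fin n) × Finset (Fin n) × Finset (Fin n) =>
        Odd t.1.card ∧ Odd t.2.1.card ∧ Odd t.2.2.card ∧
          (tripleDelta t.1 t.2.1 t.2.2).card = 1).card
      = (Finset.univ.filter fun t : Finset (Fin n) × Finset (Fin n) × Finset (Fin n) =>
        Odd t.1.card ∧ Odd t.2.1.card ∧ t.2.2.card = 1).card := by
    apply Finset.card_bij' (fun t _ => (t.1, t.2.1, symmDiff (symmDiff t.1 t.2.1) t.2.2))
      (fun t _ => (t.1, t.2.1, symmDiff (symmDiff t.1 t.2.1) t.2.2))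
    · rintro ⟨A, B, C⟩ _
      simp [symmDiff_symmDiff_cancel_left]
    · rintro ⟨A, B, S⟩ _
      simp [symmDiff_symmDiff_cancel_left]
    · rintro ⟨A, B, C⟩ ht
      simp only [mem_filter, mem_univ, true_and, tripleDelta_eq] at ht ⊢
      exact ⟨ht.1, ht.2.1, ht.2.2.2⟩
    · rintro ⟨A, B, S⟩ ht
      simp only [mem_filter, mem_univ, true_and, tripleDelta_eq] at ht ⊢
      obtain ⟨hA, hB, hS⟩ := ht
      refine ⟨hA, hB, ?_, ?_⟩
      · rw [Nat.odd_iff] at hA hB ⊢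
        have h1 := odd_symmDiff (symmDiff A B) S
        have h2 := odd_symmDiff A B
        omega
      · rw [symmDiff_symmDiff_cancel_left]  -- 
        exact hS
  rw [key]
  have huniv : (Finset.univ : Finset (Finset (Fin n) × Finset (Fin n) × Finset (Fin n)))
      = Finset.univ ×ˢ (Finset.univ ×ˢ Finset.univ) := by simp
  rw [huniv]
  rw [Finset.filter_product (fun s : Finset (Fin n) => Odd s.card)
    (fun t : Finset (Fin n) × Finset (Fin n) => Odd t.1.card ∧ t.2.card = 1)]
  rw [Finset.card_product]
  rw [Finset.filter_product (fun s : Finset (Fin n) => Odd s.card)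
    (fun t : Finset (Fin n) => t.card = 1)]
  rw [Finset.card_product, card_odd_subsets n hn, card_singletons n]
  ring_nf
  rw [show (4:ℕ) = 2 * 2 by norm_num, mul_pow]
  ring
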